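/- Let f be a function on S_n given by f(σ) = Σ_{1≤i_1<...<i_k≤n} g(i_1,...,i_k, σ(i_1), σ(i_1−1),..., σ(i_1−m+1), ..., σ(i_k),...,σ(i_k−m+1)) for some Boolean function g (with the convention σ(i)=0 for i ≤ 0). Then for any σ ∈ S_n and any transposition (i,j), |f(σ∘(i,j)) − f(σ)| ≤ 2km·n^{k−1}. -/

import Mathlib

open Finset
open scoped Classical

/-- The value `σ(i)` (1-indexed, with values in `{1,…,n}`), with the convention
`σ(i) = 0` for `i` outside `{1,…,n}`. -/
def ap {n : ℕ} (σ : Equiv.Perm (Fin n)) (i : ℕ) : ℕ :=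
  if h : 1 ≤ i ∧ i ≤ n then (σ ⟨i - 1, by omega⟩ : ℕ) + 1 else 0

/-- The local statistic of type `k` (window size `m`) associated to a Boolean
function `g`:
`f(σ) = ∑_{1 ≤ i₁ < ⋯ < i_k ≤ n} g(i₁,…,i_k, σ(i₁),…,σ(i₁-m+1),…,σ(i_k),…,σ(i_k-m+1))`
with the convention `σ(i) = 0` for `i ≤ 0`. -/
noncomputable def localStat {n : ℕ} (k m : ℕ)
    (g : (Fin k → ℕ) → (Fin k → Fin m → ℕ) → ℕ) (σ : Equiv.Perm (Fin n)) : ℕ :=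
  ∑ t ∈ (Finset.univ : Finset (Fin k → Fin n)).filter StrictMono,
    g (fun r => (t r : ℕ) + 1) (fun r s => ap σ ((t r : ℕ) + 1 - (s : ℕ)))

/-- For a local statistic `f` of type `k` with window size `m` given by a Boolean
function `g`, right-composition with a transposition changes `f` by at most
`2·k·m·n^(k-1)`. -/
lemma ap_mul_swap {n : ℕ} (σ : Equiv.Perm (Fin n)) (i j : Fin n) (p : ℕ)
    (h1 : p ≠ (i : ℕ) + 1) (h2 : p ≠ (j : ℕ) + 1) :
    ap (σ * Equiv.swap i j) p = ap σ p := by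
  unfold ap
  split_ifs with h
  · have hs : Equiv.swap i j ⟨p - 1, by omega⟩ = ⟨p - 1, by omega⟩ :=
      Equiv.swap_apply_of_ne_of_ne
        (by apply Fin.ne_of_val_ne; simp; omega)
        (by apply Fin.ne_of_val_ne; simp; omega)
    simp [Equiv.Perm.mul_apply, hs]
  · rfl

lemma card_fix {n k' : ℕ} (r : Fin (k' + 1)) (a : ℕ) :
    ((Finset.univ : Finset (Fin (k' + 1) → Fin n)).filter
      (fun t => (t r : ℕ) = a)).card ≤ n ^ k' := by
  have := Finset.card_le_card_of_injOn (f := fun t : Fin (k' + 1) → Fin n => t ∘ r.succAbove)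
    (s := (Finset.univ : Finset (Fin (k' + 1) → Fin n)).filter (fun t => (t r : ℕ) = a))
    (t := (Finset.univ : Finset (Fin k' → Fin n)))
    (fun t _ => Finset.mem_univ _)
    (by
      intro t ht t' ht' h
      simp only [Finset.mem_coe, Finset.mem_filter] at ht ht'
      funext x
      rcases eq_or_ne x r with rfl | hx
      · exact Fin.ext (ht.2.trans ht'.2.symm)
      · obtain ⟨y, rfl⟩ := Fin.exists_succAbove_eq hx
        exact congrFun h y)
  simpa using this

theorem localStat_mul_swap_diff_le {n k m : ℕ} (hk : 1 ≤ k) (hm : 1 ≤ m)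
    (hn : k + m - 1 ≤ n)
    (g : (Fin k → ℕ) → (Fin k → Fin m → ℕ) → ℕ) (hg : ∀ a b, g a b ≤ 1)
    (σ : Equiv.Perm (Fin n)) (i j : Fin n) (hij : i ≠ j) :
    |(localStat k m g (σ * Equiv.swap i j) : ℤ) - (localStat k m g σ : ℤ)|
      ≤ 2 * k * m * n ^ (k - 1) := by
  obtain ⟨k', rfl⟩ : ∃ k', k = k' + 1 := ⟨k - 1, by omega⟩
  set S := (Finset.univ : Finset (Fin (k' + 1) → Fin n)).filter StrictMono with hS
  set F := fun t : Fin (k' + 1) → Fin n =>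
    g (fun r => (t r : ℕ) + 1)
      (fun r s => ap (σ * Equiv.swap i j) ((t r : ℕ) + 1 - (s : ℕ))) with hF
  set G := fun t : Fin (k' + 1) → Fin n =>
    g (fun r => (t r : ℕ) + 1) (fun r s => ap σ ((t r : ℕ) + 1 - (s : ℕ))) with hG
  have hcast : (localStat (k' + 1) m g (σ * Equiv.swap i j) : ℤ)
      - (localStat (k' + 1) m g σ : ℤ) = ∑ t ∈ S, ((F t : ℤ) - (G t : ℤ)) := by
    rw [Finset.sum_sub_distrib]
    simp [localStat, hS, hF, hG]
  set bad := fun t : Fin (k' + 1) → Fin n =>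
    ∃ r : Fin (k' + 1), ∃ s : Fin m,
      (t r : ℕ) = (i : ℕ) + (s : ℕ) ∨ (t r : ℕ) = (j : ℕ) + (s : ℕ) with hbad
  have hgood : ∀ t, ¬ bad t → F t = G t := by
    intro t ht
    simp only [hF, hG]
    congr 1
    funext r s
    apply ap_mul_swap
    · intro hp
      exact ht ⟨r, s, Or.inl (by omega)⟩
    · intro hp
      exact ht ⟨r, s, Or.inr (by omega)⟩
  have hcard : ((Finset.univ : Finset (Fin (k' + 1) → Fin n)).filter bad).card
      ≤ 2 * (k' + 1) * m * n ^ k' := by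
    have hsub : (Finset.univ : Finset (Fin (k' + 1) → Fin n)).filter bad ⊆
        (Finset.univ : Finset (Fin (k' + 1) × Fin m)).biUnion
          (fun p => (Finset.univ : Finset (Fin (k' + 1) → Fin n)).filter
            (fun t => (t p.1 : ℕ) = (i : ℕ) + (p.2 : ℕ) ∨ (t p.1 : ℕ) = (j : ℕ) + (p.2 : ℕ))) := by
      intro t ht
      simp only [Finset.mem_filter, Finset.mem_univ, true_and] at ht
      obtain ⟨r, s, h⟩ := ht
      simp only [Finset.mem_biUnion, Finset.mem_filter, Finset.mem_univ, true_and]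
      exact ⟨(r, s), h⟩
    refine le_trans (Finset.card_le_card hsub) ?_
    refine le_trans (Finset.card_biUnion_le) ?_
    have hbnd : ∀ p : Fin (k' + 1) × Fin m,
        ((Finset.univ : Finset (Fin (k' + 1) → Fin n)).filter
          (fun t => (t p.1 : ℕ) = (i : ℕ) + (p.2 : ℕ) ∨ (t p.1 : ℕ) = (j : ℕ) + (p.2 : ℕ))).card
        ≤ 2 * n ^ k' := by
      intro p
      have h1 : (Finset.univ : Finset (Fin (k' + 1) → Fin n)).filter
          (fun t => (t p.1 : ℕ) = (i : ℕ) + (p.2 : ℕ) ∨ (t p.1 : ℕ) = (j : ℕ) + (p.2 : ℕ))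
          ⊆ ((Finset.univ : Finset (Fin (k' + 1) → Fin n)).filter
              (fun t => (t p.1 : ℕ) = (i : ℕ) + (p.2 : ℕ))) ∪
            ((Finset.univ : Finset (Fin (k' + 1) → Fin n)).filter
              (fun t => (t p.1 : ℕ) = (j : ℕ) + (p.2 : ℕ))) := by
        intro t ht
        simp only [Finset.mem_filter, Finset.mem_univ, true_and] at ht
        simp only [Finset.mem_union, Finset.mem_filter, Finset.mem_univ, true_and]
        exact ht
      refine le_trans (Finset.card_le_card h1) ?_
      refine le_trans (Finset.card_union_le _ _) ?_
      have hA := card_fix (n := n) p.1 ((i : ℕ) + (p.2 : ℕ))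
      have hB := card_fix (n := n) p.1 ((j : ℕ) + (p.2 : ℕ))
      calc _ ≤ n ^ k' + n ^ k' := Nat.add_le_add hA hB
        _ = 2 * n ^ k' := by ring
    refine le_trans (Finset.sum_le_sum fun p _ => hbnd p) ?_
    simp [Finset.sum_const, Fintype.card_prod]
    ring_nf
    omega
  rw [hcast]
  calc |∑ t ∈ S, ((F t : ℤ) - (G t : ℤ))| ≤ ∑ t ∈ S, |(F t : ℤ) - (G t : ℤ)| :=
        Finset.abs_sum_le_sum_abs _ _
    _ ≤ ∑ t ∈ S.filter bad, 1 := by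
        rw [← Finset.sum_filter_add_sum_filter_not S bad]
        have h2 : ∑ t ∈ S.filter (fun t => ¬ bad t), |(F t : ℤ) - (G t : ℤ)| = 0 := by
          apply Finset.sum_eq_zero
          intro t ht
          simp only [Finset.mem_filter] at ht
          rw [hgood t ht.2]
          simp
        rw [h2, add_zero]
        apply Finset.sum_le_sum
        intro t _
        have h3 := hg (fun r => (t r : ℕ) + 1)
          (fun r s => ap (σ * Equiv.swap i j) ((t r : ℕ) + 1 - (s : ℕ)))
        have h4 := hg (fun r => (t r : ℕ) + 1)
          (fun r s => ap σ ((t r : ℕ) + 1 - (s : ℕ)))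
        rw [abs_le]
        constructor <;> [skip; skip] <;>
          · simp only [hF, hG]
            push_cast
            omega
    _ = (S.filter bad).card := by simp
    _ ≤ (((Finset.univ : Finset (Fin (k' + 1) → Fin n)).filter bad).card : ℤ) := by
        exact_mod_cast Finset.card_le_card (Finset.filter_subset_filter _ (Finset.filter_subset _ _))
    _ ≤ 2 * (k' + 1) * m * n ^ k' := by exact_mod_cast hcard
    _ = 2 * ((k' : ℤ) + 1) * m * n ^ (k' + 1 - 1) := by push_cast; ring_nf
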